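/- The function v(z) = log|z|, transplanted to the exterior of the ellipse via the inverse of w(z) = αz + β/z, has the expansion v(y) = log|y| - log α - αβ(y₁² - y₂²)/|y|⁴ + O(|y|⁻⁴) as |y| → ∞. -/

import Mathlib

open Filter Asymptotics

/-- With y = w(z) = αz + β/z mapping {|z|>1} to the exterior of the ellipse, the
function v₀(y) = log|z(y)| satisfies
v₀(y) = log|y| - log α - αβ(y₁² - y₂²)/|y|⁴ + O(|y|⁻⁴) as |y| → ∞.
Stated in the z-variable: log|z| minus the claimed expansion evaluated at y = w(z) is
O(|w(z)|⁻⁴) as |z| → ∞. -/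
theorem stmt_6 (α β : ℝ) (hαβ : α > β) (hβ : β > 0) :
    (fun z : ℂ =>
        Real.log ‖z‖ -
          (Real.log (‖(α : ℂ) * z + (β : ℂ) / z‖) - Real.log α -
            α * β * (((α : ℂ) * z + (β : ℂ) / z).re ^ 2 - ((α : ℂ) * z + (β : ℂ) / z).im ^ 2)
              / (‖(α : ℂ) * z + (β : ℂ) / z‖) ^ 4))
      =O[Filter.comap (fun z : ℂ => ‖z‖) Filter.atTop]
      (fun z : ℂ => ((‖(α : ℂ) * z + (β : ℂ) / z‖) ^ 4)⁻¹) := by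
  have hα : (0:ℝ) < α := hβ.trans hαβ
  rw [isBigO_iff]
  refine ⟨5 * (β/α)^2 * (α+β)^4, ?_⟩
  filter_upwards [Filter.preimage_mem_comap (Filter.eventually_ge_atTop (2:ℝ))] with z hz2
  have hz2 : (2:ℝ) ≤ ‖z‖ := hz2
  have hz0 : z ≠ 0 := by
    intro h; rw [h] at hz2; simp at hz2; linarith
  have hzpos : (0:ℝ) < ‖z‖ := lt_of_lt_of_le (by norm_num) hz2
  set t : ℂ := (β:ℂ)/((α:ℂ)*z^2) with ht
  have hta : ‖t‖ = β/(α*(‖z‖)^2) := by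
    rw [ht, norm_div, norm_mul, Complex.norm_real, Complex.norm_real, norm_pow,
      Real.norm_of_nonneg hβ.le, Real.norm_of_nonneg hα.le]
  clear_value t
  have hz4 : (4:ℝ) ≤ (‖z‖)^2 := by nlinarith
  have htle : ‖t‖ ≤ 1/4 := by
    rw [hta]
    calc β/(α*(‖z‖)^2) ≤ α/(α*4) := by
          apply div_le_div₀ hα.le hαβ.le (by positivity)
          nlinarith
      _ = 1/4 := by field_simp
  have hαc : (α:ℂ) ≠ 0 := by exact_mod_cast hα.ne'
  have h1t : (3/4 : ℝ) ≤ ‖1+t‖ := by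
    have h := norm_add_le (1+t) (-t)
    simp only [add_neg_cancel_right, norm_neg] at h
    simp only [norm_one] at h
    linarith
  have h1t0 : (1:ℂ) + t ≠ 0 := by
    intro h
    rw [h] at h1t; simp at h1t; linarith
  set w : ℂ := (α:ℂ)*z + (β:ℂ)/z with hwdef
  clear_value w
  have hw : w = (α:ℂ)*z*(1+t) := by
    rw [hwdef, ht]; field_simp
  have hwabs : ‖w‖ = α * ‖z‖ * ‖1+t‖ := by
    rw [hw, norm_mul, norm_mul, Complex.norm_real, Real.norm_of_nonneg hα.le]
  have hwpos : 0 < ‖w‖ := by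
    rw [hwabs]; positivity
  -- log decomposition
  have hlog : Real.log (‖w‖) =
      Real.log α + Real.log (‖z‖) + Real.log (‖1+t‖) := by
    rw [hwabs, Real.log_mul (by positivity) (by positivity),
      Real.log_mul (by positivity) (by positivity)]
  have hlog1t : Real.log (‖1+t‖) = (Complex.log (1+t)).re := by
    rw [Complex.log_re]
  -- quadrupole term
  have hw0 : w ≠ 0 := by
    intro h; rw [h] at hwpos; simp at hwpos
  have hquad : α * β * ((w.re)^2 - (w.im)^2) / (‖w‖)^4
      = (((α*β : ℝ) : ℂ) * (w^2)⁻¹).re := by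
    have hn : Complex.normSq (w^2) = (‖w‖)^4 := by
      rw [Complex.normSq_eq_norm_sq, norm_pow]; ring
    have hre : (w^2).re = w.re^2 - w.im^2 := by
      rw [sq, Complex.mul_re]; ring
    rw [Complex.re_ofReal_mul, Complex.inv_re, hn, hre, mul_div_assoc]
  have hkey : ((α*β : ℝ) : ℂ) * (w^2)⁻¹ = t/(1+t)^2 := by
    rw [hw]
    have h2 : ((α:ℂ)*z*(1+t))^2 = ((α:ℂ)^2*z^2)*(1+t)^2 := by ring
    rw [h2, mul_inv, ← mul_assoc, div_eq_mul_inv]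
    congr 1
    rw [ht]
    push_cast
    field_simp
  -- the main quantity
  have hmain : Real.log (‖z‖) -
      (Real.log (‖w‖) - Real.log α -
        α * β * ((w.re)^2 - (w.im)^2) / (‖w‖)^4)
      = (t/(1+t)^2 - Complex.log (1+t)).re := by
    rw [hquad, hkey, hlog, hlog1t, Complex.sub_re]
    ring
  rw [hmain]
  -- bound the complex quantity
  have htlt : ‖t‖ < 1 := by
    linarith
  have hb1 : ‖Complex.log (1+t) - t‖ ≤ ‖t‖^2 := by
    refine le_trans (Complex.norm_log_one_add_sub_self_le htlt) ?_
    have h34 : (3/4:ℝ) ≤ 1 - ‖t‖ := by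
      linarith
    have : (1 - ‖t‖)⁻¹ ≤ 4/3 := by
      rw [inv_le_comm₀ (by linarith) (by norm_num)]
      linarith
    calc ‖t‖^2 * (1-‖t‖)⁻¹ / 2 ≤ ‖t‖^2 * (4/3) / 2 := by
          apply div_le_div_of_nonneg_right ?_ (by norm_num)
          exact mul_le_mul_of_nonneg_left this (by positivity)
      _ ≤ ‖t‖^2 := by nlinarith [norm_nonneg t]
    
  have hb2 : ‖t/(1+t)^2 - t‖ ≤ 4 * ‖t‖^2 := by
    have heq : t/(1+t)^2 - t = -(t^2*(2+t))/(1+t)^2 := by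
      field_simp; ring
    rw [heq]
    rw [norm_div, norm_neg, norm_mul, norm_pow, norm_pow]
    have h2t : ‖(2:ℂ)+t‖ ≤ 9/4 := by
      refine le_trans (norm_add_le _ _) ?_
      simp only [Complex.norm_ofNat]
      linarith
    have h1tn : (3/4:ℝ) ≤ ‖(1:ℂ)+t‖ := by exact h1t
    have hden : (9/16:ℝ) ≤ ‖(1:ℂ)+t‖^2 := by nlinarith
    calc ‖t‖^2 * ‖(2:ℂ)+t‖ / ‖(1:ℂ)+t‖^2
        ≤ ‖t‖^2 * (9/4) / (9/16) := by
          apply div_le_div₀ (by positivity) ?_ (by norm_num) hden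
          exact mul_le_mul_of_nonneg_left h2t (by positivity)
      _ = 4 * ‖t‖^2 := by ring
  have hbound : ‖(t/(1+t)^2 - Complex.log (1+t)).re‖ ≤ 5 * ‖t‖^2 := by
    refine le_trans (Complex.abs_re_le_norm _) ?_
    calc ‖t/(1+t)^2 - Complex.log (1+t)‖
        ≤ ‖t/(1+t)^2 - t‖ + ‖t - Complex.log (1+t)‖ := by
          have : t/(1+t)^2 - Complex.log (1+t)
              = (t/(1+t)^2 - t) + (t - Complex.log (1+t)) := by ring
          rw [this]; exact norm_add_le _ _
      _ ≤ 4 * ‖t‖^2 + ‖t‖^2 := by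
          rw [← norm_neg (t - Complex.log (1+t))]
          have : -(t - Complex.log (1+t)) = Complex.log (1+t) - t := by ring
          rw [this]
          exact add_le_add hb2 hb1
      _ = 5 * ‖t‖^2 := by ring
  refine le_trans hbound ?_
  -- now convert: 5‖t‖² = 5(β/α)²|z|⁻⁴ ≤ 5(β/α)²(α+β)⁴ (|w|⁴)⁻¹
  have htn : ‖t‖^2 = (β/α)^2 * ((‖z‖)^4)⁻¹ := by
    rw [hta]
    field_simp
  have hwle : ‖w‖ ≤ (α+β) * ‖z‖ := by
    rw [hwdef]
    refine le_trans (norm_add_le _ _) ?_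
    rw [norm_mul, norm_div, Complex.norm_real, Complex.norm_real,
      Real.norm_of_nonneg hα.le, Real.norm_of_nonneg hβ.le]
    have : β / ‖z‖ ≤ β * ‖z‖ := by
      rw [div_le_iff₀ hzpos]
      nlinarith
    linarith [this]
  have hw4 : (‖w‖)^4 ≤ (α+β)^4 * (‖z‖)^4 := by
    calc (‖w‖)^4 ≤ ((α+β) * ‖z‖)^4 := by
          apply pow_le_pow_left₀ hwpos.le hwle
      _ = (α+β)^4 * (‖z‖)^4 := by ring
  have hz4inv : ((‖z‖)^4)⁻¹ ≤ (α+β)^4 * ((‖w‖)^4)⁻¹ := by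
    have hwpos4 : (0:ℝ) < (‖w‖)^4 := by positivity
    have h0 := inv_anti₀ hwpos4 hw4
    calc ((‖z‖)^4)⁻¹
        = (α+β)^4 * ((α+β)^4 * (‖z‖)^4)⁻¹ := by
          rw [mul_inv]
          field_simp
      _ ≤ (α+β)^4 * ((‖w‖)^4)⁻¹ :=
          mul_le_mul_of_nonneg_left h0 (by positivity)
  have hnorm : ‖((‖w‖)^4)⁻¹‖ = ((‖w‖)^4)⁻¹ := by
    rw [Real.norm_of_nonneg (by positivity)]
  rw [hnorm, htn]
  calc 5 * ((β/α)^2 * ((‖z‖)^4)⁻¹)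
      ≤ 5 * ((β/α)^2 * ((α+β)^4 * ((‖w‖)^4)⁻¹)) := by
        apply mul_le_mul_of_nonneg_left ?_ (by norm_num)
        exact mul_le_mul_of_nonneg_left hz4inv (by positivity)
    _ = 5 * (β/α)^2 * (α+β)^4 * ((‖w‖)^4)⁻¹ := by ring
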